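/- Every regular Baire σ-space has a dense metrizable G_δ subspace. -/

import Mathlib

open Set Cardinal TopologicalSpace

/-- A subset `s` of a topological space is discrete (as a subspace) iff every point of `s`
has an open neighbourhood in the ambient space meeting `s` only in that point. -/
def IsDiscreteSubset {X : Type*} [TopologicalSpace X] (s : Set X) : Prop :=
  ∀ x ∈ s, ∃ U : Set X, IsOpen U ∧ U ∩ s = {x}

/-- `dis X`: the least cardinality of a family of discrete subsets covering `X`. -/
noncomputable def dis (X : Type*) [TopologicalSpace X] : Cardinal :=
  sInf {c : Cardinal | ∃ 𝒟 : Set (Set X), #𝒟 = c ∧ (∀ D ∈ 𝒟, IsDiscreteSubset D) ∧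
    ⋃₀ 𝒟 = Set.univ}

/-- `Delta X`: the dispersion character, i.e. the least cardinality of a nonempty open set. -/
noncomputable def Delta (X : Type*) [TopologicalSpace X] : Cardinal :=
  sInf {c : Cardinal | ∃ U : Set X, IsOpen U ∧ U.Nonempty ∧ #U = c}

/-- A family `𝒩` of subsets is discrete if every point has an open neighbourhood meeting at
most one member of `𝒩`. -/
def IsDiscreteFamily {X : Type*} [TopologicalSpace X] (𝒩 : Set (Set X)) : Prop :=
  ∀ x : X, ∃ U : Set X, IsOpen U ∧ x ∈ U ∧ {N | N ∈ 𝒩 ∧ (U ∩ N).Nonempty}.Subsingleton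

/-- A network: for every open `U` and `x ∈ U` there is a member `N` with `x ∈ N ⊆ U`. -/
def IsNetwork {X : Type*} [TopologicalSpace X] (𝒩 : Set (Set X)) : Prop :=
  ∀ U : Set X, IsOpen U → ∀ x ∈ U, ∃ N ∈ 𝒩, x ∈ N ∧ N ⊆ U

/-- `X` has a σ-discrete network. -/
def HasSigmaDiscreteNetwork (X : Type*) [TopologicalSpace X] : Prop :=
  ∃ 𝒩 : ℕ → Set (Set X), (∀ n, IsDiscreteFamily (𝒩 n)) ∧ IsNetwork (⋃ n, 𝒩 n)

section Aux

variable {X : Type*} [TopologicalSpace X]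

/-- If `U` is open, meets `closure N`, then it meets `N`. -/
lemma aux_open_inter_closure {U N : Set X} (hU : IsOpen U) {x : X} (hxU : x ∈ U)
    (hx : x ∈ closure N) : (U ∩ N).Nonempty :=
  mem_closure_iff.1 hx U hU hxU

/-- The union of closed subsets of the closures of the members of a discrete family
is closed. -/
lemma aux_discrete_biUnion_closed {𝒟 : Set (Set X)} (hd : IsDiscreteFamily 𝒟)
    (F : Set X → Set X) (hFc : ∀ N ∈ 𝒟, IsClosed (F N))
    (hFs : ∀ N ∈ 𝒟, F N ⊆ closure N) :
    IsClosed (⋃ N ∈ 𝒟, F N) := by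
  rw [← isOpen_compl_iff, isOpen_iff_forall_mem_open]
  intro x hx
  obtain ⟨U, hUo, hxU, hsub⟩ := hd x
  by_cases hex : ∃ N ∈ 𝒟, (U ∩ N).Nonempty
  · obtain ⟨N, hN, hUN⟩ := hex
    have hxF : x ∉ F N := fun h => hx (mem_biUnion hN h)
    refine ⟨U \ F N, ?_, hUo.sdiff (hFc N hN), hxU, hxF⟩
    rintro y ⟨hyU, hyF⟩ hy
    obtain ⟨N', hN', hyN'⟩ := mem_iUnion₂.1 hy
    have : N' = N := hsub ⟨hN', aux_open_inter_closure hUo hyU (hFs N' hN' hyN')⟩ ⟨hN, hUN⟩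
    exact hyF (this ▸ hyN')
  · refine ⟨U, ?_, hUo, hxU⟩
    intro y hyU hy
    obtain ⟨N', hN', hyN'⟩ := mem_iUnion₂.1 hy
    exact hex ⟨N', hN', aux_open_inter_closure hUo hyU (hFs N' hN' hyN')⟩

/-- The union of the boundaries of the closures of the members of a discrete family has
empty interior. -/
lemma aux_discrete_boundary_interior_empty {𝒟 : Set (Set X)} (hd : IsDiscreteFamily 𝒟) :
    interior (⋃ N ∈ 𝒟, closure N \ interior (closure N)) = ∅ := by
  set E := ⋃ N ∈ 𝒟, closure N \ interior (closure N) with hE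
  rw [eq_empty_iff_forall_notMem]
  intro x hx
  have hxE := interior_subset hx
  rw [hE, mem_iUnion₂] at hxE
  obtain ⟨N₀, hN₀, hxc, hxi⟩ := hxE
  obtain ⟨U, hUo, hxU, hsub⟩ := hd x
  have hVo : IsOpen (interior E ∩ U) := isOpen_interior.inter hUo
  have hxV : x ∈ interior E ∩ U := ⟨hx, hxU⟩
  have hUN₀ : (U ∩ N₀).Nonempty := aux_open_inter_closure hUo hxU hxc
  have hVsub : interior E ∩ U ⊆ closure N₀ := by
    rintro y ⟨hyE, hyU⟩
    have := interior_subset hyE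
    rw [hE, mem_iUnion₂] at this
    obtain ⟨N', hN', hyc, -⟩ := this
    have : N' = N₀ := hsub ⟨hN', aux_open_inter_closure hUo hyU hyc⟩ ⟨hN₀, hUN₀⟩
    exact this ▸ hyc
  have : interior E ∩ U ⊆ interior (closure N₀) :=
    (hVo.subset_interior_iff).2 hVsub
  exact hxi (this hxV)

end Aux

/-- Every regular Baire σ-space has a dense metrizable G_δ subspace. -/
theorem statement3 (X : Type*) [TopologicalSpace X] [T2Space X] [RegularSpace X] [BaireSpace X]
    (hnet : HasSigmaDiscreteNetwork X) :
    ∃ M : Set X, Dense M ∧ (∃ f : ℕ → Set X, (∀ n, IsOpen (f n)) ∧ M = ⋂ n, f n) ∧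
      TopologicalSpace.MetrizableSpace M := by
  classical
  obtain ⟨𝒩, hdisc, hnetw⟩ := hnet
  set E : ℕ → Set X := fun n => ⋃ N ∈ 𝒩 n, closure N \ interior (closure N) with hEdef
  have hEclosed : ∀ n, IsClosed (E n) := fun n =>
    aux_discrete_biUnion_closed (hdisc n) (fun N => closure N \ interior (closure N))
      (fun N _ => isClosed_closure.sdiff isOpen_interior) (fun N _ => diff_subset)
  have hGopen : ∀ n, IsOpen (E n)ᶜ := fun n => (hEclosed n).isOpen_compl
  have hGdense : ∀ n, Dense (E n)ᶜ := fun n =>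
    interior_eq_empty_iff_dense_compl.1 (aux_discrete_boundary_interior_empty (hdisc n))
  set M : Set X := ⋂ n, (E n)ᶜ with hMdef
  have hMdense : Dense M := dense_iInter_of_isOpen hGopen hGdense
  refine ⟨M, hMdense, ⟨fun n => (E n)ᶜ, hGopen, rfl⟩, ?_⟩
  -- points of M lying in the closure of a network member lie in its interior
  have hMint : ∀ x ∈ M, ∀ n, ∀ N ∈ 𝒩 n, x ∈ closure N → x ∈ interior (closure N) := by
    intro x hxM n N hN hxc
    by_contra hxi
    exact (mem_iInter.1 hxM n) (mem_biUnion hN ⟨hxc, hxi⟩)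
  -- the entourages
  set S : ℕ → Set (M × M) := fun n =>
    {p | ∀ k ≤ n, ∀ N ∈ 𝒩 k, ((p.1 : X) ∈ closure N ↔ (p.2 : X) ∈ closure N)} with hSdef
  have hSrefl : ∀ n (x : M), (x, x) ∈ S n := fun n x k _ N _ => Iff.rfl
  have hSsymm : ∀ n (x y : M), (x, y) ∈ S n → (y, x) ∈ S n :=
    fun n x y h k hk N hN => (h k hk N hN).symm
  have hStrans : ∀ n (x y z : M), (x, y) ∈ S n → (y, z) ∈ S n → (x, z) ∈ S n :=
    fun n x y z h1 h2 k hk N hN => (h1 k hk N hN).trans (h2 k hk N hN)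
  have hSanti : ∀ {m n : ℕ}, m ≤ n → S n ⊆ S m :=
    fun {m n} h p hp k hk => hp k (hk.trans h)
  -- "balls" are open
  have hball : ∀ (x : M) (n : ℕ), ∃ O : Set X, IsOpen O ∧ (x : X) ∈ O ∧
      ∀ y : M, (y : X) ∈ O → (x, y) ∈ S n := by
    intro x n
    have hlevel : ∀ k : ℕ, ∃ O : Set X, IsOpen O ∧ (x : X) ∈ O ∧
        ∀ y : M, (y : X) ∈ O → ∀ N ∈ 𝒩 k, ((x : X) ∈ closure N ↔ (y : X) ∈ closure N) := by
      intro k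
      obtain ⟨U, hUo, hxU, hsub⟩ := hdisc k (x : X)
      by_cases hex : ∃ N₀ ∈ 𝒩 k, (x : X) ∈ closure N₀
      · obtain ⟨N₀, hN₀, hxc⟩ := hex
        have hxint := hMint x x.2 k N₀ hN₀ hxc
        have hUN₀ : (U ∩ N₀).Nonempty := aux_open_inter_closure hUo hxU hxc
        refine ⟨U ∩ interior (closure N₀), hUo.inter isOpen_interior, ⟨hxU, hxint⟩, ?_⟩
        rintro y ⟨hyU, hyint⟩ N hN
        by_cases hNN : N = N₀
        · subst hNN
          exact ⟨fun _ => interior_subset hyint, fun _ => hxc⟩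
        · constructor
          · intro hxcN
            exact absurd (hsub ⟨hN, aux_open_inter_closure hUo hxU hxcN⟩ ⟨hN₀, hUN₀⟩) hNN
          · intro hycN
            exact absurd (hsub ⟨hN, aux_open_inter_closure hUo hyU hycN⟩ ⟨hN₀, hUN₀⟩) hNN
      · push_neg at hex
        refine ⟨(⋃ N ∈ 𝒩 k, closure N)ᶜ,
          (aux_discrete_biUnion_closed (hdisc k) closure (fun N _ => isClosed_closure)
            (fun N _ => subset_rfl)).isOpen_compl, ?_, ?_⟩
        · intro h
          obtain ⟨N, hN, hxc⟩ := mem_iUnion₂.1 h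
          exact hex N hN hxc
        · intro y hy N hN
          constructor
          · intro h
            exact absurd h (hex N hN)
          · intro h
            exact absurd (mem_biUnion hN h) hy
    choose O hOo hxO hOspec using hlevel
    refine ⟨⋂ k ∈ Finset.range (n + 1), O k,
      isOpen_biInter_finset (fun k _ => hOo k), ?_, ?_⟩
    · exact mem_iInter₂.2 fun k _ => hxO k
    · intro y hy k hk N hN
      exact hOspec k y (mem_iInter₂.1 hy k (Finset.mem_range.2 (Nat.lt_succ_of_le hk))) N hN
  -- the entourages form a neighbourhood basis
  have hbase : ∀ (x : M) (W : Set X), IsOpen W → (x : X) ∈ W →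
      ∃ n, ∀ y : M, (x, y) ∈ S n → (y : X) ∈ W := by
    intro x W hWo hxW
    obtain ⟨t, htx, htc, htW⟩ := exists_mem_nhds_isClosed_subset (hWo.mem_nhds hxW)
    obtain ⟨V, hVt, hVo, hxV⟩ := mem_nhds_iff.1 htx
    obtain ⟨N, hNmem, hxN, hNV⟩ := hnetw V hVo (x : X) hxV
    obtain ⟨n, hNn⟩ := mem_iUnion.1 hNmem
    refine ⟨n, fun y hy => ?_⟩
    have hycl : (y : X) ∈ closure N := (hy n le_rfl N hNn).1 (subset_closure hxN)
    have : closure N ⊆ t := by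
      calc closure N ⊆ closure V := closure_mono hNV
        _ ⊆ closure t := closure_mono hVt
        _ = t := htc.closure_eq
    exact htW (this hycl)
  -- separation
  have hsep : ∀ x y : M, (∀ n, (x, y) ∈ S n) → x = y := by
    intro x y h
    by_contra hne
    have hne' : (x : X) ≠ (y : X) := fun e => hne (Subtype.ext e)
    obtain ⟨U, V, hUo, hVo, hxU, hyV, hUV⟩ := t2_separation hne'
    obtain ⟨n, hn⟩ := hbase x U hUo hxU
    exact Set.disjoint_left.1 hUV (hn y (h n)) hyV
  -- the distance
  set d : M → M → ℝ := fun x y =>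
    if h : ∀ n, (x, y) ∈ S n then 0 else (1 / 2 : ℝ) ^ Nat.find (not_forall.1 h) with hddef
  have half_pos : (0 : ℝ) < 1 / 2 := by norm_num
  have half_lt_one : (1 / 2 : ℝ) < 1 := by norm_num
  have hdnonneg : ∀ x y, 0 ≤ d x y := by
    intro x y
    rw [hddef]
    dsimp only
    split
    · exact le_refl 0
    · positivity
  have hdlt : ∀ (x y : M) (n : ℕ), d x y < (1 / 2 : ℝ) ^ n ↔ (x, y) ∈ S n := by
    intro x y n
    rw [hddef]
    dsimp only
    split
    · rename_i h
      simp only [iff_true_intro (h n), iff_true]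
      positivity
    · rename_i h
      rw [pow_lt_pow_iff_right_of_lt_one₀ half_pos half_lt_one]
      constructor
      · intro hlt
        exact not_not.1 (Nat.find_min (not_forall.1 h) hlt)
      · intro hmem
        by_contra hle
        push_neg at hle
        exact Nat.find_spec (not_forall.1 h) (hSanti hle hmem)
  have hdself : ∀ x : M, d x x = 0 := by
    intro x
    rw [hddef]
    exact dif_pos fun n => hSrefl n x
  have hdle : ∀ x y, d x y ≤ d y x := by
    intro x y
    by_cases h : ∀ n, (x, y) ∈ S n
    · have : d x y = 0 := by rw [hddef]; exact dif_pos h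
      rw [this]
      exact hdnonneg y x
    · have h' : ¬ ∀ n, (y, x) ∈ S n := fun hc => h fun n => hSsymm n y x (hc n)
      have e1 : d x y = (1 / 2 : ℝ) ^ Nat.find (not_forall.1 h) := by
        rw [hddef]; exact dif_neg h
      have e2 : d y x = (1 / 2 : ℝ) ^ Nat.find (not_forall.1 h') := by
        rw [hddef]; exact dif_neg h'
      rw [e1, e2]
      refine pow_le_pow_of_le_one half_pos.le half_lt_one.le ?_
      refine Nat.find_le ?_
      intro hc
      exact Nat.find_spec (not_forall.1 h) (hSsymm _ y x hc)
  have hdcomm : ∀ x y : M, d x y = d y x := fun x y => le_antisymm (hdle x y) (hdle y x)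
  have hdmax : ∀ x y z, d x z ≤ max (d x y) (d y z) := by
    intro x y z
    by_contra hlt
    push_neg at hlt
    by_cases h : ∀ n, (x, z) ∈ S n
    · have h0 : d x z = 0 := by rw [hddef]; exact dif_pos h
      rw [h0] at hlt
      exact absurd hlt (not_lt.2 (le_max_of_le_left (hdnonneg x y)))
    · have e : d x z = (1 / 2 : ℝ) ^ Nat.find (not_forall.1 h) := by
        rw [hddef]; exact dif_neg h
      have hxy : (x, y) ∈ S (Nat.find (not_forall.1 h)) :=
        (hdlt x y _).1 (lt_of_le_of_lt (le_max_left _ _) (by rw [← e]; exact hlt))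
      have hyz : (y, z) ∈ S (Nat.find (not_forall.1 h)) :=
        (hdlt y z _).1 (lt_of_le_of_lt (le_max_right _ _) (by rw [← e]; exact hlt))
      exact Nat.find_spec (not_forall.1 h) (hStrans _ x y z hxy hyz)
  have hdtri : ∀ x y z : M, d x z ≤ d x y + d y z := fun x y z =>
    (hdmax x y z).trans (max_le_add_of_nonneg (hdnonneg x y) (hdnonneg y z))
  have hdeq : ∀ x y : M, d x y = 0 → x = y := by
    intro x y h0
    by_cases h : ∀ n, (x, y) ∈ S n
    · exact hsep x y h
    · exfalso
      have e : d x y = (1 / 2 : ℝ) ^ Nat.find (not_forall.1 h) := by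
        rw [hddef]; exact dif_neg h
      rw [h0] at e
      exact absurd e.symm (ne_of_gt (by positivity))
  have hH : ∀ s : Set M, IsOpen s ↔ ∀ x ∈ s, ∃ ε > 0, ∀ y, d x y < ε → y ∈ s := by
    intro s
    constructor
    · intro hs x hxs
      obtain ⟨W, hWo, hWs⟩ := isOpen_induced_iff.1 hs
      have hxW : (x : X) ∈ W := by
        rw [← hWs] at hxs
        exact hxs
      obtain ⟨n, hn⟩ := hbase x W hWo hxW
      refine ⟨(1 / 2 : ℝ) ^ n, by positivity, fun y hy => ?_⟩
      have := hn y ((hdlt x y n).1 hy)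
      rw [← hWs]
      exact this
    · intro hcond
      rw [isOpen_iff_forall_mem_open]
      intro x hxs
      obtain ⟨ε, hε, hεs⟩ := hcond x hxs
      obtain ⟨n, hn⟩ := exists_pow_lt_of_lt_one hε half_lt_one
      obtain ⟨O, hOo, hxO, hOspec⟩ := hball x n
      refine ⟨Subtype.val ⁻¹' O, ?_, hOo.preimage continuous_subtype_val, hxO⟩
      intro y hyO
      exact hεs y (lt_trans ((hdlt x y n).2 (hOspec y hyO)) hn)
  letI := MetricSpace.ofDistTopology d hdself hdcomm hdtri hH hdeq
  exact inferInstance
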